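/- Two half-turn dual quaternions h₁, h₂ (satisfying hᵢ·conj(hᵢ) = 1, hᵢ + conj(hᵢ) = 0) representing rotations by π about two lines in Euclidean 3-space commute, h₁h₂ = h₂h₁, if and only if the two axes are either identical or orthogonal and co-planar. -/

import Mathlib

open Quaternion TrivSqZeroExt

/-- Rearrangement helper for noncommutative rings. -/
lemma rearrange {α : Type*} [Ring α] {X Y A B : α} (h : X = Y) (key : A - B = X - Y) :
    A = B := by
  rw [h, sub_self] at key; exact sub_eq_zero.mp key

/-- A self-adjoint quaternion with zero real part is zero. -/
lemma star_self_re_zero (q : Quaternion ℝ) (h : star q = q) (h0 : q.re = 0) : q = 0 := by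
  have h1 : star q = -q := Quaternion.star_eq_neg.2 h0
  rw [h1] at h
  have h2 : (2 : ℝ) • q = 0 := by
    rw [two_smul]; nth_rewrite 1 [← h]; abel
  simpa using (smul_eq_zero.mp h2).resolve_left (by norm_num)

/-- For pure quaternions, `q * p = star (p * q)`. -/
lemma mul_comm_star (p q : Quaternion ℝ) (hp : p.re = 0) (hq : q.re = 0) :
    q * p = star (p * q) := by
  rw [star_mul, Quaternion.star_eq_neg.2 hp, Quaternion.star_eq_neg.2 hq, neg_mul_neg]

/-- For pure quaternions, `p*q + q*p = 2 (p*q).re`. -/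
lemma pure_mul_add_mul (p q : Quaternion ℝ) (hp : p.re = 0) (hq : q.re = 0) :
    p * q + q * p = ((2 * (p * q).re : ℝ) : Quaternion ℝ) := by
  rw [mul_comm_star p q hp hq, Quaternion.self_add_star']

lemma re_mul_comm (p q : Quaternion ℝ) : (p * q).re = (q * p).re := by
  simp [Quaternion.re_mul]; ring

lemma re_mul_star (p q : Quaternion ℝ) (hq : q.re = 0) :
    (p * star q).re = -(p * q).re := by
  rw [Quaternion.star_eq_neg.2 hq]; simp

/-- The dual quaternions: dual numbers over the real quaternions. -/
noncomputable abbrev DH := DualNumber (Quaternion ℝ)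

set_option maxHeartbeats 1000000 in
/-- Two half-turns, about lines with normalised Plücker coordinates `(d₁, m₁)`
and `(d₂, m₂)` and represented by the dual quaternions `hᵢ = dᵢ + ε mᵢ`,
commute (as displacements, i.e. `h₁h₂` and `h₂h₁` agree up to a nonzero real
factor) iff the two axes are identical (equal or opposite Plücker coordinates)
or orthogonal (`⟨d₁, d₂⟩ = 0`) and co-planar (`⟨d₁, m₂⟩ + ⟨d₂, m₁⟩ = 0`).
Here `⟨p, q⟩ = (p ⬝ conj q).re` is the Euclidean inner product. -/
theorem halfturns_commute_iff (d₁ m₁ d₂ m₂ : Quaternion ℝ)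
    (hd₁ : d₁.re = 0) (hd₂ : d₂.re = 0) (hm₁ : m₁.re = 0) (hm₂ : m₂.re = 0)
    (hu₁ : d₁ * star d₁ = 1) (hu₂ : d₂ * star d₂ = 1)
    (hpl₁ : (d₁ * star m₁).re = 0) (hpl₂ : (d₂ * star m₂).re = 0) :
    (∃ c : ℝ, c ≠ 0 ∧
        (inl d₁ + inr m₁ : DH) * (inl d₂ + inr m₂) =
          c • ((inl d₂ + inr m₂ : DH) * (inl d₁ + inr m₁))) ↔
      ((d₂ = d₁ ∧ m₂ = m₁) ∨ (d₂ = -d₁ ∧ m₂ = -m₁) ∨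
        ((d₁ * star d₂).re = 0 ∧ (d₁ * star m₂).re + (d₂ * star m₁).re = 0)) := by
  have hsd₁ : star d₁ = -d₁ := Quaternion.star_eq_neg.2 hd₁
  have hsd₂ : star d₂ = -d₂ := Quaternion.star_eq_neg.2 hd₂
  have hsq₁ : d₁ * d₁ = -1 := by
    have := hu₁; rw [hsd₁, mul_neg] at this
    rw [← neg_neg (d₁ * d₁), this]
  have hsq₂ : d₂ * d₂ = -1 := by
    have := hu₂; rw [hsd₂, mul_neg] at this
    rw [← neg_neg (d₂ * d₂), this]
  have hn₁ : Quaternion.normSq d₁ = 1 := by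
    have := hu₁; rw [Quaternion.self_mul_star] at this
    exact Quaternion.coe_injective (by simpa using this)
  have hn₂ : Quaternion.normSq d₂ = 1 := by
    have := hu₂; rw [Quaternion.self_mul_star] at this
    exact Quaternion.coe_injective (by simpa using this)
  have hd₁ne : d₁ ≠ 0 := by
    intro h; rw [h] at hn₁; simp at hn₁
  have hd₂ne : d₂ ≠ 0 := by
    intro h; rw [h] at hn₂; simp at hn₂
  constructor
  · rintro ⟨c, hc, heq⟩
    have h1 : d₁ * d₂ = c • (d₂ * d₁) := by simpa using congrArg fst heq
    have h2 : d₁ * m₂ + m₁ * d₂ = c • (d₂ * m₁) + c • (m₂ * d₁) := by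
      have := congrArg snd heq; simp at this; exact this
    -- c = ±1
    have hc2 : c ^ 2 = 1 := by
      have := congrArg Quaternion.normSq h1
      rw [Quaternion.normSq_smul, map_mul, map_mul, hn₁, hn₂] at this
      simpa using this.symm
    rcases mul_self_eq_one_iff.mp (by nlinarith : c * c = 1) with h | h
    · -- c = 1 : axes commute
      subst h
      rw [one_smul] at h1
      rw [one_smul, one_smul] at h2
      -- d₂ = ±d₁
      have hu : (d₁ * d₂) * (d₁ * d₂) = 1 := by
        rw [show d₁ * d₂ * (d₁ * d₂) = d₁ * (d₂ * d₁) * d₂ by noncomm_ring, ← h1,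
          show d₁ * (d₁ * d₂) * d₂ = (d₁ * d₁) * (d₂ * d₂) by noncomm_ring, hsq₁, hsq₂]
        noncomm_ring
      have hfac : (d₁ * d₂ - 1) * (d₁ * d₂ + 1) = 0 := by
        have e : (d₁ * d₂ - 1) * (d₁ * d₂ + 1) = (d₁ * d₂) * (d₁ * d₂) - 1 := by noncomm_ring
        rw [e, hu, sub_self]
      rcases mul_eq_zero.mp hfac with h | h
      · -- d₁ * d₂ = 1 ⇒ d₂ = -d₁
        have hdd : d₁ * d₂ = 1 := sub_eq_zero.mp h
        have hd2 : d₂ = -d₁ := by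
          have := congrArg (fun x => d₁ * x) hdd
          simp only [← mul_assoc, hsq₁] at this
          have : -d₂ = d₁ := by simpa using this
          rw [← this, neg_neg]
        subst hd2
        right; left
        refine ⟨rfl, ?_⟩
        have hv : d₁ * (m₂ + m₁) = (m₂ + m₁) * d₁ := rearrange h2 (by noncomm_ring)
        set v := m₂ + m₁ with hvdef
        have hvre : v.re = 0 := by simp [hvdef, hm₁, hm₂]
        have hstar : star (d₁ * v) = d₁ * v := by
          rw [star_mul, hsd₁, Quaternion.star_eq_neg.2 hvre, neg_mul_neg, ← hv]
        have hre : (d₁ * v).re = 0 := by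
          have e1 : (d₁ * m₁).re = 0 := by
            have := re_mul_star d₁ m₁ hm₁; rw [hpl₁] at this; linarith
          have e2 : (d₁ * m₂).re = 0 := by
            have t := re_mul_star d₁ m₂ hm₂
            have t2 : (d₁ * star m₂).re = 0 := by
              have t3 := hpl₂; rw [neg_mul, Quaternion.re_neg] at t3; linarith
            rw [t2] at t; linarith
          simp [hvdef, mul_add, e1, e2]
        have h0 : d₁ * v = 0 := star_self_re_zero _ hstar hre
        have hv0 : v = 0 := (mul_eq_zero.mp h0).resolve_left hd₁ne
        have : m₂ + m₁ = 0 := by rw [← hvdef]; exact hv0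
        exact eq_neg_of_add_eq_zero_left this
      · -- d₁ * d₂ = -1 ⇒ d₂ = d₁
        have hdd : d₁ * d₂ = -1 := eq_neg_of_add_eq_zero_left h
        have hd2 : d₂ = d₁ := by
          have := congrArg (fun x => d₁ * x) hdd
          simp only [← mul_assoc, hsq₁] at this
          simpa using this
        subst hd2
        left
        refine ⟨rfl, ?_⟩
        have hv : d₂ * (m₂ - m₁) = (m₂ - m₁) * d₂ := rearrange h2 (by noncomm_ring)
        set v := m₂ - m₁ with hvdef
        have hvre : v.re = 0 := by simp [hvdef, hm₁, hm₂]
        have hstar : star (d₂ * v) = d₂ * v := by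
          rw [star_mul, hsd₂, Quaternion.star_eq_neg.2 hvre, neg_mul_neg, ← hv]
        have hre : (d₂ * v).re = 0 := by
          have e1 : (d₂ * m₁).re = 0 := by
            have := re_mul_star d₂ m₁ hm₁; rw [hpl₁] at this; linarith
          have e2 : (d₂ * m₂).re = 0 := by
            have := re_mul_star d₂ m₂ hm₂; rw [hpl₂] at this; linarith
          simp [hvdef, mul_sub, e1, e2]
        have h0 : d₂ * v = 0 := star_self_re_zero _ hstar hre
        have hv0 : v = 0 := (mul_eq_zero.mp h0).resolve_left hd₂ne
        rw [hvdef, sub_eq_zero] at hv0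
        exact hv0
    · -- c = -1 : axes anticommute
      subst h
      right; right
      have h1' : d₁ * d₂ + d₂ * d₁ = 0 := by
        rw [h1]; simp
      have h2' : (d₁ * m₂ + m₂ * d₁) + (m₁ * d₂ + d₂ * m₁) = 0 := by
        simp only [neg_smul, one_smul] at h2
        rw [show (d₁ * m₂ + m₂ * d₁) + (m₁ * d₂ + d₂ * m₁) =
          (d₁ * m₂ + m₁ * d₂) - (-(d₂ * m₁) + -(m₂ * d₁)) by noncomm_ring, h2, sub_self]
      constructor
      · rw [re_mul_star d₁ d₂ hd₂]
        rw [pure_mul_add_mul d₁ d₂ hd₁ hd₂] at h1'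
        have : (2 : ℝ) * (d₁ * d₂).re = 0 :=
          Quaternion.coe_injective (by rw [Quaternion.coe_zero]; exact h1')
        linarith
      · rw [re_mul_star d₁ m₂ hm₂, re_mul_star d₂ m₁ hm₁]
        rw [pure_mul_add_mul d₁ m₂ hd₁ hm₂, pure_mul_add_mul m₁ d₂ hm₁ hd₂,
          ← Quaternion.coe_add] at h2'
        have h3 : (2 : ℝ) * (d₁ * m₂).re + 2 * (m₁ * d₂).re = 0 :=
          Quaternion.coe_injective (by rw [Quaternion.coe_zero]; exact h2')
        have hcomm := re_mul_comm m₁ d₂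
        linarith
  · rintro (⟨rfl, rfl⟩ | ⟨h₁, h₂⟩ | ⟨ho, hcp⟩)
    · exact ⟨1, one_ne_zero, by simp⟩
    · refine ⟨1, one_ne_zero, ?_⟩
      have e : (inl d₂ + inr m₂ : DH) = -(inl d₁ + inr m₁) := by
        rw [h₁, h₂]
        ext <;> simp
      rw [e, one_smul, mul_neg, neg_mul]
    · refine ⟨-1, by norm_num, ?_⟩
      have e1 : d₁ * d₂ = -(d₂ * d₁) := by
        have hre : (d₁ * d₂).re = 0 := by
          have := re_mul_star d₁ d₂ hd₂; rw [ho] at this; linarith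
        have := pure_mul_add_mul d₁ d₂ hd₁ hd₂
        rw [hre] at this; simp at this
        exact eq_neg_of_add_eq_zero_left this
      have e2 : d₁ * m₂ + m₁ * d₂ = -(d₂ * m₁ + m₂ * d₁) := by
        have a1 := pure_mul_add_mul d₁ m₂ hd₁ hm₂
        have a2 := pure_mul_add_mul m₁ d₂ hm₁ hd₂
        have hre : (d₁ * m₂).re + (m₁ * d₂).re = 0 := by
          have b1 := re_mul_star d₁ m₂ hm₂
          have b2 := re_mul_star d₂ m₁ hm₁
          have b3 := re_mul_comm m₁ d₂
          linarith
        have hsum : (d₁ * m₂ + m₁ * d₂) + (d₂ * m₁ + m₂ * d₁) =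
            ((2 * (d₁ * m₂).re + 2 * (m₁ * d₂).re : ℝ) : Quaternion ℝ) := by
          rw [show (d₁ * m₂ + m₁ * d₂) + (d₂ * m₁ + m₂ * d₁) =
            (d₁ * m₂ + m₂ * d₁) + (m₁ * d₂ + d₂ * m₁) by abel, a1, a2,
            ← Quaternion.coe_add]
        rw [show 2 * (d₁ * m₂).re + 2 * (m₁ * d₂).re = 0 by linarith] at hsum
        simp at hsum
        exact eq_neg_of_add_eq_zero_left hsum
      refine TrivSqZeroExt.ext ?_ ?_
      · simpa using e1
      · have e3 : d₁ * m₂ + m₁ * d₂ = -(m₂ * d₁) + -(d₂ * m₁) := by rw [e2]; abel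
        simpa using e3
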